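/- arXiv:1905.10772 — 6 statements merged into one kernel-verified Lean document; each statement's English description precedes it below -/
import Mathlib

section
/- Let Ω be an algebraically closed field containing F, and let a ∈ F with a ≠ 0. Then the quintic polynomial H = (C−A)(D−B)(E−C)(A−D)(B−E) − a·(B−A)(C−B)(D−C)(E−D)(A−E), regarded as an element of the polynomial ring over Ω in the five variables A, B, C, D, E, is irreducible. -/
namespace StmtAux
open MvPolynomial

variable {σ : Type*} {R : Type*}

lemma degree_add' (u v : σ →₀ ℕ) : (u + v).degree = u.degree + v.degree := by
  simp only [Finsupp.degree_eq_weight_one]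
  exact map_add _ u v

lemma totalDegree_eq_sup_degree [CommSemiring R] (p : MvPolynomial σ R) :
    p.totalDegree = p.support.sup Finsupp.degree := rfl

lemma homogeneousComponent_top_mul [DecidableEq σ] [CommRing R] (p q : MvPolynomial σ R) :
    homogeneousComponent (p.totalDegree + q.totalDegree) (p * q) =
      homogeneousComponent p.totalDegree p * homogeneousComponent q.totalDegree q := by
  ext m
  rw [coeff_homogeneousComponent]
  by_cases hm : m.degree = p.totalDegree + q.totalDegree
  · rw [if_pos hm, MvPolynomial.coeff_mul, MvPolynomial.coeff_mul]
    apply Finset.sum_congr rfl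
    rintro ⟨u, v⟩ huv
    have huvm : u + v = m := Finset.HasAntidiagonal.mem_antidiagonal.mp huv
    have hdeg : u.degree + v.degree = p.totalDegree + q.totalDegree := by
      rw [← degree_add', huvm, hm]
    rw [coeff_homogeneousComponent, coeff_homogeneousComponent]
    by_cases hu : u.degree = p.totalDegree
    · have hv : v.degree = q.totalDegree := by omega
      rw [if_pos hu, if_pos hv]
    · rcases lt_or_gt_of_ne hu with hlt | hgt
      · have hv : q.totalDegree < v.degree := by omega
        rw [MvPolynomial.coeff_eq_zero_of_totalDegree_lt (f := q) (d := v) hv]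
        rw [if_neg hu]
        ring
      · rw [MvPolynomial.coeff_eq_zero_of_totalDegree_lt (f := p) (d := u) hgt]
        rw [if_neg hu]
        ring
  · rw [if_neg hm, eq_comm, MvPolynomial.coeff_mul]
    apply Finset.sum_eq_zero
    rintro ⟨u, v⟩ huv
    have huvm : u + v = m := Finset.HasAntidiagonal.mem_antidiagonal.mp huv
    rw [coeff_homogeneousComponent, coeff_homogeneousComponent]
    by_cases hu : u.degree = p.totalDegree
    · by_cases hv : v.degree = q.totalDegree
      · exfalso; apply hm; rw [← huvm, degree_add', hu, hv]
      · rw [if_neg hv]; ring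
    · rw [if_neg hu]; ring

lemma homogeneousComponent_top_ne_zero [CommRing R] {p : MvPolynomial σ R} (hp : p ≠ 0) :
    homogeneousComponent p.totalDegree p ≠ 0 := by
  obtain ⟨m, hm, hdeg⟩ : ∃ m ∈ p.support, p.totalDegree = m.degree :=
    Finset.exists_mem_eq_sup _ (MvPolynomial.support_nonempty.mpr hp) _
  intro h
  have := congrArg (MvPolynomial.coeff m) h
  rw [coeff_homogeneousComponent, if_pos hdeg.symm, MvPolynomial.coeff_zero] at this
  exact (MvPolynomial.mem_support_iff.mp hm) this

lemma totalDegree_mul_eq [DecidableEq σ] [CommRing R] [IsDomain R] {p q : MvPolynomial σ R}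
    (hp : p ≠ 0) (hq : q ≠ 0) :
    (p * q).totalDegree = p.totalDegree + q.totalDegree := by
  refine le_antisymm (MvPolynomial.totalDegree_mul p q) ?_
  by_contra hlt
  push_neg at hlt
  have h0 : homogeneousComponent (p.totalDegree + q.totalDegree) (p * q) = 0 :=
    homogeneousComponent_eq_zero _ _ hlt
  rw [homogeneousComponent_top_mul] at h0
  exact mul_ne_zero (homogeneousComponent_top_ne_zero hp)
    (homogeneousComponent_top_ne_zero hq) h0

lemma eq_C_of_totalDegree_eq_zero [DecidableEq σ] [CommSemiring R] {p : MvPolynomial σ R}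
    (h : p.totalDegree = 0) : p = MvPolynomial.C (MvPolynomial.coeff 0 p) := by
  ext m
  rw [MvPolynomial.coeff_C]
  by_cases hm : m = 0
  · subst hm; rw [if_pos rfl]
  · rw [if_neg (fun hh => hm hh.symm)]
    by_contra hc
    have hsup : m ∈ p.support := MvPolynomial.mem_support_iff.mpr hc
    have := MvPolynomial.le_totalDegree hsup
    rw [h, Nat.le_zero] at this
    exact hm ((Finsupp.degree_eq_zero_iff m).mp this)

lemma totalDegree_aeval_le {n k : ℕ} [CommSemiring R] (f : Fin n → MvPolynomial (Fin k) R)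
    (hf : ∀ i, (f i).totalDegree ≤ 1) (p : MvPolynomial (Fin n) R) :
    (MvPolynomial.aeval f p).totalDegree ≤ p.totalDegree := by
  conv_lhs => rw [p.as_sum]
  rw [map_sum]
  refine (MvPolynomial.totalDegree_finset_sum _ _).trans (Finset.sup_le ?_)
  intro v hv
  rw [MvPolynomial.aeval_monomial]
  refine (MvPolynomial.totalDegree_mul _ _).trans ?_
  have h1 : (algebraMap R (MvPolynomial (Fin k) R) (MvPolynomial.coeff v p)).totalDegree = 0 :=
    MvPolynomial.totalDegree_C _
  rw [h1, zero_add]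
  refine le_trans ?_ (MvPolynomial.le_totalDegree hv)
  rw [Finsupp.prod]
  refine (MvPolynomial.totalDegree_finset_prod _ _).trans ?_
  have : ∀ i ∈ v.support, ((f i) ^ (v i)).totalDegree ≤ v i := by
    intro i _
    refine (MvPolynomial.totalDegree_pow _ _).trans ?_
    calc v i * (f i).totalDegree ≤ v i * 1 := Nat.mul_le_mul_left _ (hf i)
      _ = v i := Nat.mul_one _
  refine (Finset.sum_le_sum this).trans ?_
  rw [Finsupp.sum]

end StmtAux


namespace StmtAux2
open Polynomial

variable {Ω : Type*} [Field Ω]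

noncomputable def c2 (a : Ω) : Polynomial (Polynomial Ω) :=
  C (C a * (-X - X^2)) + C (C a * (1+X) + X + X^2) * X - C X * X^2

noncomputable def c1 (a : Ω) : Polynomial (Polynomial Ω) :=
  C (C a * (X + X^2) - X - 3*X^2 - 2*X^3) * X + C (X + 2*X^2 - C a - C a * X) * X^2

noncomputable def c0 (Ω : Type*) [Field Ω] : Polynomial (Polynomial Ω) :=
  C (X^2 + 2*X^3 + X^4) * X - C (X^2 + X^3) * X^2

noncomputable def fpoly (a : Ω) : Polynomial (Polynomial (Polynomial Ω)) :=
  C (c2 a) * X^2 + C (c1 a) * X + C (c0 Ω)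

lemma coeff_fpoly_two (a : Ω) : (fpoly a).coeff 2 = c2 a := by
  simp only [fpoly, coeff_add, coeff_C_mul, coeff_X_pow, coeff_X, coeff_C]
  norm_num

lemma coeff_fpoly_one (a : Ω) : (fpoly a).coeff 1 = c1 a := by
  simp only [fpoly, coeff_add, coeff_C_mul, coeff_X_pow, coeff_X, coeff_C]
  norm_num

lemma coeff_fpoly_zero (a : Ω) : (fpoly a).coeff 0 = c0 Ω := by
  simp only [fpoly, coeff_add, coeff_C_mul, coeff_X_pow, coeff_X, coeff_C]
  norm_num

lemma c2_coeff_zero (a : Ω) : (c2 a).coeff 0 = C a * (-X - X^2) := by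
  simp only [c2, coeff_add, coeff_sub, coeff_C_mul, coeff_X_pow, coeff_X, coeff_C,
    mul_ite, mul_one, mul_zero]
  norm_num

lemma aux_ne (a : Ω) (ha : a ≠ 0) : C a * (-X - X^2 : Polynomial Ω) ≠ 0 := by
  intro h
  have := congrArg (fun p => Polynomial.coeff p 1) h
  simp at this
  exact ha this

lemma c2_ne_zero (a : Ω) (ha : a ≠ 0) : c2 a ≠ 0 := by
  intro h
  have h0 : (c2 a).coeff 0 = 0 := by rw [h]; simp
  rw [c2_coeff_zero] at h0
  exact aux_ne a ha h0

lemma fpoly_natDegree (a : Ω) (ha : a ≠ 0) : (fpoly a).natDegree = 2 := by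
  unfold fpoly
  compute_degree!
  all_goals exact c2_ne_zero a ha

-- factorization of c0 into primes
lemma c0_fact : c0 Ω = X * (C X * (C X * (C (X+1) * (C (X+1) - X)))) := by
  unfold c0
  simp only [map_add, map_mul, map_pow, map_one, map_ofNat]
  ring

lemma c1_fact (a : Ω) : c1 a =
    X * (C (C a * (X + X^2) - X - 3*X^2 - 2*X^3) + C (X + 2*X^2 - C a - C a * X) * X) := by
  unfold c1; ring

-- the four kill-homomorphisms evaluated on c2
lemma k1_c2 (a : Ω) : Polynomial.eval 0 (c2 a) = C a * (-X - X^2) := by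
  simp [c2]

lemma k2_c2 (a : Ω) : Polynomial.map (Polynomial.evalRingHom (0 : Ω)) (c2 a) = C a * X := by
  simp only [c2, Polynomial.map_add, Polynomial.map_sub, Polynomial.map_mul, Polynomial.map_pow,
    Polynomial.map_C, Polynomial.map_X, Polynomial.map_one, coe_evalRingHom, eval_add, eval_mul,
    eval_pow, eval_C, eval_X, eval_one, eval_neg, eval_sub, map_neg, map_one]
  norm_num

lemma k3_c2 (a : Ω) : Polynomial.map (Polynomial.evalRingHom (-1 : Ω)) (c2 a) = X^2 := by
  simp only [c2, Polynomial.map_add, Polynomial.map_sub, Polynomial.map_mul, Polynomial.map_pow,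
    Polynomial.map_C, Polynomial.map_X, Polynomial.map_one, coe_evalRingHom, eval_add, eval_mul,
    eval_pow, eval_C, eval_X, eval_one, eval_neg, eval_sub, map_neg, map_one]
  ring_nf
  norm_num

lemma k4_c2 (a : Ω) : Polynomial.eval (X + 1 : Polynomial Ω) (c2 a) = C a * (1 + X) := by
  simp only [c2, eval_add, eval_sub, eval_mul, eval_pow, eval_C, eval_X, eval_one]
  ring

lemma k2_c2_ne (a : Ω) (ha : a ≠ 0) : (C a * X : Polynomial Ω) ≠ 0 := by
  intro h
  have := congrArg (fun p => Polynomial.coeff p 1) h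
  simp at this; exact ha this

lemma k4_c2_ne (a : Ω) (ha : a ≠ 0) : (C a * (1 + X) : Polynomial Ω) ≠ 0 := by
  intro h
  have := congrArg (fun p => Polynomial.coeff p 0) h
  simp at this; exact ha this

lemma fpoly_primitive (a : Ω) (ha : a ≠ 0) : (fpoly a).IsPrimitive := by
  intro r hr
  have hco := (Polynomial.C_dvd_iff_dvd_coeff r _).mp hr
  have h2 : r ∣ c2 a := by simpa [coeff_fpoly_two] using hco 2
  have h0 : r ∣ c0 Ω := by simpa [coeff_fpoly_zero] using hco 0
  by_contra hu
  have hr0 : r ≠ 0 := by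
    rintro rfl
    rw [zero_dvd_iff] at h2
    exact c2_ne_zero a ha h2
  obtain ⟨pp, hppirr, hppr⟩ := WfDvdMonoid.exists_irreducible_factor hu hr0
  have hpp : Prime pp := (UniqueFactorizationMonoid.irreducible_iff_prime).mp hppirr
  have hp2 : pp ∣ c2 a := hppr.trans h2
  have hp0 : pp ∣ c0 Ω := hppr.trans h0
  rw [c0_fact] at hp0
  have prX : Prime (X : Polynomial (Polynomial Ω)) := Polynomial.prime_X
  have prCX : Prime (C X : Polynomial (Polynomial Ω)) := Polynomial.prime_C_iff.mpr Polynomial.prime_X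
  have prCX1 : Prime (C (X+1) : Polynomial (Polynomial Ω)) := by
    refine Polynomial.prime_C_iff.mpr ?_
    simpa using Polynomial.prime_X_sub_C (-1 : Ω)
  have prL : Prime (C (X+1) - X : Polynomial (Polynomial Ω)) := by
    have := (Polynomial.prime_X_sub_C (X + 1 : Polynomial Ω)).neg
    simpa [neg_sub] using this
  rcases hpp.dvd_or_dvd hp0 with h | h
  · -- pp ∣ X  (the prime y)
    have hXd : (X : Polynomial (Polynomial Ω)) ∣ c2 a :=
      ((hpp.associated_of_dvd prX h).symm.dvd).trans hp2
    obtain ⟨t, ht⟩ := hXd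
    have := congrArg (Polynomial.eval 0) ht
    rw [k1_c2] at this
    simp only [eval_mul, eval_X, zero_mul] at this
    exact aux_ne a ha this
  rcases hpp.dvd_or_dvd h with h | h
  · -- pp ∣ C X  (the prime z)
    have hXd : (C X : Polynomial (Polynomial Ω)) ∣ c2 a :=
      ((hpp.associated_of_dvd prCX h).symm.dvd).trans hp2
    obtain ⟨t, ht⟩ := hXd
    have := congrArg (Polynomial.map (Polynomial.evalRingHom (0 : Ω))) ht
    rw [k2_c2] at this
    simp only [Polynomial.map_mul, Polynomial.map_C, coe_evalRingHom, eval_X, map_zero,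
      Polynomial.C_0, zero_mul] at this
    exact k2_c2_ne a ha this
  rcases hpp.dvd_or_dvd h with h | h
  · -- pp ∣ C X again
    have hXd : (C X : Polynomial (Polynomial Ω)) ∣ c2 a :=
      ((hpp.associated_of_dvd prCX h).symm.dvd).trans hp2
    obtain ⟨t, ht⟩ := hXd
    have := congrArg (Polynomial.map (Polynomial.evalRingHom (0 : Ω))) ht
    rw [k2_c2] at this
    simp only [Polynomial.map_mul, Polynomial.map_C, coe_evalRingHom, eval_X, map_zero,
      Polynomial.C_0, zero_mul] at this
    exact k2_c2_ne a ha this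
  rcases hpp.dvd_or_dvd h with h | h
  · -- pp ∣ C (X+1)
    have hXd : (C (X+1) : Polynomial (Polynomial Ω)) ∣ c2 a :=
      ((hpp.associated_of_dvd prCX1 h).symm.dvd).trans hp2
    obtain ⟨t, ht⟩ := hXd
    have := congrArg (Polynomial.map (Polynomial.evalRingHom (-1 : Ω))) ht
    rw [k3_c2] at this
    have hz : ((X + 1 : Polynomial Ω).eval (-1)) = 0 := by simp
    simp only [Polynomial.map_mul, Polynomial.map_C, coe_evalRingHom, hz,
      Polynomial.C_0, zero_mul] at this
    exact pow_ne_zero 2 X_ne_zero this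
  · -- pp ∣ C (X+1) - X
    have hXd : (C (X+1) - X : Polynomial (Polynomial Ω)) ∣ c2 a :=
      ((hpp.associated_of_dvd prL h).symm.dvd).trans hp2
    obtain ⟨t, ht⟩ := hXd
    have := congrArg (Polynomial.eval (X + 1 : Polynomial Ω)) ht
    rw [k4_c2] at this
    simp only [eval_mul, eval_sub, eval_C, eval_X, eval_add, eval_one, sub_self, zero_mul] at this
    exact k4_c2_ne a ha this

lemma fpoly_eisenstein (a : Ω) (ha : a ≠ 0) :
    (fpoly a).IsEisensteinAt (Ideal.span {(X : Polynomial (Polynomial Ω))}) := by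
  constructor
  · rw [Polynomial.leadingCoeff, fpoly_natDegree a ha, coeff_fpoly_two]
    intro hmem
    rw [Ideal.mem_span_singleton] at hmem
    rw [Polynomial.X_dvd_iff] at hmem
    rw [c2_coeff_zero] at hmem
    exact aux_ne a ha hmem
  · intro n hn
    rw [fpoly_natDegree a ha] at hn
    rw [Ideal.mem_span_singleton]
    interval_cases n
    · rw [coeff_fpoly_zero, c0_fact]; exact Dvd.intro _ rfl
    · rw [coeff_fpoly_one, c1_fact]; exact Dvd.intro _ rfl
  · rw [coeff_fpoly_zero]
    rw [Ideal.span_singleton_pow, Ideal.mem_span_singleton]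
    intro hdvd
    rw [Polynomial.X_pow_dvd_iff] at hdvd
    have h1 := hdvd 1 (by norm_num)
    have : (c0 Ω).coeff 1 = X^2 + 2*X^3 + X^4 := by
      simp only [c0, coeff_sub, coeff_C_mul, coeff_X_pow, coeff_X, coeff_C]
      norm_num
    rw [this] at h1
    have := congrArg (fun p => Polynomial.coeff p 4) h1
    simp at this

lemma fpoly_irreducible (a : Ω) (ha : a ≠ 0) : Irreducible (fpoly a) := by
  refine (fpoly_eisenstein a ha).irreducible ?_ (fpoly_primitive a ha) ?_
  · exact (Ideal.span_singleton_prime Polynomial.X_ne_zero).mpr Polynomial.prime_X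
  · rw [fpoly_natDegree a ha]; norm_num

end StmtAux2

namespace StmtAux3
open MvPolynomial StmtAux StmtAux2

variable {Ω : Type*} [Field Ω]

noncomputable def Hpoly (a : Ω) : MvPolynomial (Fin 5) Ω :=
  (X 2 - X 0) * (X 3 - X 1) * (X 4 - X 2) * (X 0 - X 3) * (X 1 - X 4)
    - C a * ((X 1 - X 0) * (X 2 - X 1) * (X 3 - X 2) * (X 4 - X 3) * (X 0 - X 4))

noncomputable def wsub : Fin 5 → MvPolynomial (Fin 3) Ω :=
  ![0, X 0, X 1, X 2, X 2 + 1]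

noncomputable def vsub : Fin 5 → Polynomial (Polynomial (Polynomial Ω)) :=
  ![0, Polynomial.X, Polynomial.C Polynomial.X, Polynomial.C (Polynomial.C Polynomial.X),
    Polynomial.C (Polynomial.C Polynomial.X) + 1]

noncomputable def F1 : MvPolynomial (Fin 1) Ω ≃ₐ[Ω] Polynomial Ω :=
  (finSuccEquiv Ω 0).trans (Polynomial.mapAlgEquiv (isEmptyAlgEquiv Ω (Fin 0)))

noncomputable def F2 : MvPolynomial (Fin 2) Ω ≃ₐ[Ω] Polynomial (Polynomial Ω) :=
  (finSuccEquiv Ω 1).trans (Polynomial.mapAlgEquiv F1)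

noncomputable def F3 : MvPolynomial (Fin 3) Ω ≃ₐ[Ω] Polynomial (Polynomial (Polynomial Ω)) :=
  (finSuccEquiv Ω 2).trans (Polynomial.mapAlgEquiv F2)

lemma F1_X0 : F1 (X 0 : MvPolynomial (Fin 1) Ω) = Polynomial.X := by
  simp [F1, finSuccEquiv_X_zero]

lemma F2_X0 : F2 (X 0 : MvPolynomial (Fin 2) Ω) = Polynomial.X := by
  simp [F2, finSuccEquiv_X_zero]

lemma F2_X1 : F2 (X 1 : MvPolynomial (Fin 2) Ω) = Polynomial.C Polynomial.X := by
  show ((finSuccEquiv Ω 1).trans (Polynomial.mapAlgEquiv F1)) (X (Fin.succ 0)) = _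
  rw [AlgEquiv.trans_apply, finSuccEquiv_X_succ]
  simp [Polynomial.map_C, F1_X0]

lemma F3_X0 : F3 (X 0 : MvPolynomial (Fin 3) Ω) = Polynomial.X := by
  simp [F3, finSuccEquiv_X_zero]

lemma F3_X1 : F3 (X 1 : MvPolynomial (Fin 3) Ω) = Polynomial.C Polynomial.X := by
  show ((finSuccEquiv Ω 2).trans (Polynomial.mapAlgEquiv F2)) (X (Fin.succ 0)) = _
  rw [AlgEquiv.trans_apply, finSuccEquiv_X_succ]
  simp [Polynomial.map_C, F2_X0]

lemma F3_X2 : F3 (X 2 : MvPolynomial (Fin 3) Ω) = Polynomial.C (Polynomial.C Polynomial.X) := by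
  show ((finSuccEquiv Ω 2).trans (Polynomial.mapAlgEquiv F2)) (X (Fin.succ 1)) = _
  rw [AlgEquiv.trans_apply, finSuccEquiv_X_succ]
  simp [Polynomial.map_C, F2_X1]

lemma hcomp (p : MvPolynomial (Fin 5) Ω) :
    F3 ((aeval (wsub : Fin 5 → MvPolynomial (Fin 3) Ω)) p) = (aeval vsub) p := by
  have : (F3.toAlgHom.comp (aeval (wsub : Fin 5 → MvPolynomial (Fin 3) Ω))
      : MvPolynomial (Fin 5) Ω →ₐ[Ω] _) = aeval vsub := by
    apply MvPolynomial.algHom_ext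
    intro i
    fin_cases i <;>
      simp [wsub, vsub, F3_X0, F3_X1, F3_X2]
  calc F3 ((aeval wsub) p) = (F3.toAlgHom.comp (aeval wsub)) p := rfl
    _ = (aeval vsub) p := by rw [this]

lemma hPhiH (a : Ω) : (aeval vsub) (Hpoly a) = fpoly a := by
  unfold Hpoly fpoly c0 c1 c2 vsub
  simp only [map_sub, map_mul, map_add, aeval_X, aeval_C, Matrix.cons_val_zero,
    Matrix.cons_val_one, Matrix.head_cons, Matrix.cons_val_two, Matrix.tail_cons,
    Matrix.cons_val_three, Matrix.cons_val_four, Polynomial.algebraMap_apply,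
    Algebra.algebraMap_self_apply]
  simp only [map_add, map_mul, map_pow, map_sub, map_neg, map_one, map_ofNat]
  ring

end StmtAux3

namespace StmtAux3
open MvPolynomial StmtAux StmtAux2 Finsupp

variable {Ω : Type*} [Field Ω]

lemma c0_coeff_one : (c0 Ω).coeff 1 =
    Polynomial.X^2 + 2*Polynomial.X^3 + Polynomial.X^4 := by
  simp only [c0, Polynomial.coeff_sub, Polynomial.coeff_C_mul, Polynomial.coeff_X_pow,
    Polynomial.coeff_X, Polynomial.coeff_C]
  norm_num

lemma coeff_chain (a : Ω) :
    MvPolynomial.coeff (Finsupp.cons 0 (Finsupp.cons 1 (Finsupp.cons 4 (0 : Fin 0 →₀ ℕ))))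
      ((aeval (wsub : Fin 5 → MvPolynomial (Fin 3) Ω)) (Hpoly a)) = 1 := by
  set P := (aeval (wsub : Fin 5 → MvPolynomial (Fin 3) Ω)) (Hpoly a) with hPdef
  have hP : F3 P = fpoly a := by rw [hcomp, hPhiH]
  set q2 : MvPolynomial (Fin 2) Ω := ((finSuccEquiv Ω 2) P).coeff 0 with hq2
  have hF2 : F2 q2 = c0 Ω := by
    have h1 : (F3 P).coeff 0 = F2 q2 := by
      show ((Polynomial.mapAlgEquiv F2) ((finSuccEquiv Ω 2) P)).coeff 0 = _
      rw [Polynomial.coe_mapAlgEquiv, Polynomial.coeff_map]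
      rfl
    rw [hP, coeff_fpoly_zero] at h1
    exact h1.symm
  set q1 : MvPolynomial (Fin 1) Ω := ((finSuccEquiv Ω 1) q2).coeff 1 with hq1
  have hF1 : F1 q1 = Polynomial.X^2 + 2*Polynomial.X^3 + Polynomial.X^4 := by
    have h1 : (F2 q2).coeff 1 = F1 q1 := by
      show ((Polynomial.mapAlgEquiv F1) ((finSuccEquiv Ω 1) q2)).coeff 1 = _
      rw [Polynomial.coe_mapAlgEquiv, Polynomial.coeff_map]
      rfl
    rw [hF2, c0_coeff_one] at h1
    exact h1.symm
  set q0 : MvPolynomial (Fin 0) Ω := ((finSuccEquiv Ω 0) q1).coeff 4 with hq0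
  have hE : (isEmptyAlgEquiv Ω (Fin 0)) q0 = 1 := by
    have h1 : (F1 q1).coeff 4 = (isEmptyAlgEquiv Ω (Fin 0)) q0 := by
      show ((Polynomial.mapAlgEquiv (isEmptyAlgEquiv Ω (Fin 0))) ((finSuccEquiv Ω 0) q1)).coeff 4
          = _
      rw [Polynomial.coe_mapAlgEquiv, Polynomial.coeff_map]
      rfl
    rw [hF1] at h1
    simp only [Polynomial.coeff_add, Polynomial.coeff_X_pow, Polynomial.coeff_C_mul] at h1
    rw [← h1]
    norm_num
  have hq01 : q0 = 1 :=
    (isEmptyAlgEquiv Ω (Fin 0)).injective (by rw [hE, map_one])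
  have e1 : MvPolynomial.coeff (Finsupp.cons 0 (Finsupp.cons 1 (Finsupp.cons 4 (0 : Fin 0 →₀ ℕ))))
      P = MvPolynomial.coeff (Finsupp.cons 1 (Finsupp.cons 4 (0 : Fin 0 →₀ ℕ))) q2 :=
    (finSuccEquiv_coeff_coeff _ P 0).symm
  have e2 : MvPolynomial.coeff (Finsupp.cons 1 (Finsupp.cons 4 (0 : Fin 0 →₀ ℕ))) q2
      = MvPolynomial.coeff (Finsupp.cons 4 (0 : Fin 0 →₀ ℕ)) q1 :=
    (finSuccEquiv_coeff_coeff _ q2 1).symm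
  have e3 : MvPolynomial.coeff (Finsupp.cons 4 (0 : Fin 0 →₀ ℕ)) q1
      = MvPolynomial.coeff (0 : Fin 0 →₀ ℕ) q0 :=
    (finSuccEquiv_coeff_coeff _ q1 4).symm
  rw [e1, e2, e3, hq01]
  simp

lemma wsub_deg : ∀ i, ((wsub : Fin 5 → MvPolynomial (Fin 3) Ω) i).totalDegree ≤ 1 := by
  intro i
  fin_cases i
  · simp [wsub]
  · simp [wsub, MvPolynomial.totalDegree_X]
  · simp [wsub, MvPolynomial.totalDegree_X]
  · simp [wsub, MvPolynomial.totalDegree_X]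
  · show ((X 2 + 1 : MvPolynomial (Fin 3) Ω)).totalDegree ≤ 1
    refine (MvPolynomial.totalDegree_add _ _).trans ?_
    simp [MvPolynomial.totalDegree_X, MvPolynomial.totalDegree_one]

lemma Hpoly_deg_le (a : Ω) : (Hpoly a).totalDegree ≤ 5 := by
  have hf : ∀ i j : Fin 5, ((X i - X j : MvPolynomial (Fin 5) Ω)).totalDegree ≤ 1 := by
    intro i j
    refine (MvPolynomial.totalDegree_sub _ _).trans ?_
    simp [MvPolynomial.totalDegree_X]
  have five : ∀ p1 p2 p3 p4 p5 : MvPolynomial (Fin 5) Ω,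
      p1.totalDegree ≤ 1 → p2.totalDegree ≤ 1 → p3.totalDegree ≤ 1 → p4.totalDegree ≤ 1 →
      p5.totalDegree ≤ 1 → (p1*p2*p3*p4*p5).totalDegree ≤ 5 := by
    intro p1 p2 p3 p4 p5 h1 h2 h3 h4 h5
    refine (MvPolynomial.totalDegree_mul _ _).trans ?_
    have h1234 : (p1*p2*p3*p4).totalDegree ≤ 4 := by
      refine (MvPolynomial.totalDegree_mul _ _).trans ?_
      have h123 : (p1*p2*p3).totalDegree ≤ 3 := by
        refine (MvPolynomial.totalDegree_mul _ _).trans ?_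
        have h12 : (p1*p2).totalDegree ≤ 2 := by
          refine (MvPolynomial.totalDegree_mul _ _).trans ?_
          omega
        omega
      omega
    omega
  refine (MvPolynomial.totalDegree_sub _ _).trans (max_le ?_ ?_)
  · exact five _ _ _ _ _ (hf _ _) (hf _ _) (hf _ _) (hf _ _) (hf _ _)
  · refine (MvPolynomial.totalDegree_mul _ _).trans ?_
    rw [MvPolynomial.totalDegree_C]
    simpa using five _ _ _ _ _ (hf _ _) (hf _ _) (hf _ _) (hf _ _) (hf _ _)

lemma P_deg (a : Ω) (ha : a ≠ 0) :
    ((aeval (wsub : Fin 5 → MvPolynomial (Fin 3) Ω)) (Hpoly a)).totalDegree = 5 := by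
  refine le_antisymm ((totalDegree_aeval_le _ wsub_deg _).trans (Hpoly_deg_le a)) ?_
  have hc := coeff_chain a
  have hs : (Finsupp.cons 0 (Finsupp.cons 1 (Finsupp.cons 4 (0 : Fin 0 →₀ ℕ))))
      ∈ ((aeval (wsub : Fin 5 → MvPolynomial (Fin 3) Ω)) (Hpoly a)).support :=
    MvPolynomial.mem_support_iff.mpr (by rw [hc]; exact one_ne_zero)
  have hle := MvPolynomial.le_totalDegree hs
  have hsum : ((Finsupp.cons 0 (Finsupp.cons 1 (Finsupp.cons 4 (0 : Fin 0 →₀ ℕ)))).sum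
      fun _ e => e) = 5 := by
    rw [Finsupp.sum_fintype _ _ (fun _ => rfl)]
    rw [Fin.sum_univ_three]
    have v0 : (Finsupp.cons 0 (Finsupp.cons 1 (Finsupp.cons 4 (0 : Fin 0 →₀ ℕ))))
        (0 : Fin 3) = 0 := Finsupp.cons_zero _ _
    have v1 : (Finsupp.cons 0 (Finsupp.cons 1 (Finsupp.cons 4 (0 : Fin 0 →₀ ℕ))))
        (1 : Fin 3) = 1 := by
      show (Finsupp.cons 0 (Finsupp.cons 1 (Finsupp.cons 4 (0 : Fin 0 →₀ ℕ))))
        (Fin.succ 0) = 1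
      rw [Finsupp.cons_succ]
      exact Finsupp.cons_zero _ _
    have v2 : (Finsupp.cons 0 (Finsupp.cons 1 (Finsupp.cons 4 (0 : Fin 0 →₀ ℕ))))
        (2 : Fin 3) = 4 := by
      show (Finsupp.cons 0 (Finsupp.cons 1 (Finsupp.cons 4 (0 : Fin 0 →₀ ℕ))))
        (Fin.succ 1) = 4
      rw [Finsupp.cons_succ]
      show (Finsupp.cons 1 (Finsupp.cons 4 (0 : Fin 0 →₀ ℕ))) (Fin.succ 0) = 4
      rw [Finsupp.cons_succ]
      exact Finsupp.cons_zero _ _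
    rw [v0, v1, v2]
  rw [hsum] at hle
  exact hle

lemma unit_deg {n : ℕ} {x : MvPolynomial (Fin n) Ω} (h : IsUnit x) : x.totalDegree = 0 := by
  obtain ⟨b, hb⟩ := h.exists_right_inv
  have hx0 : x ≠ 0 := left_ne_zero_of_mul_eq_one hb
  have hb0 : b ≠ 0 := right_ne_zero_of_mul_eq_one hb
  have h2 := totalDegree_mul_eq hx0 hb0
  rw [hb, MvPolynomial.totalDegree_one] at h2
  omega

lemma side (a : Ω) (ha : a ≠ 0) (g h : MvPolynomial (Fin 5) Ω) (hgh : Hpoly a = g * h)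
    (hu : IsUnit ((aeval (vsub : Fin 5 → Polynomial (Polynomial (Polynomial Ω)))) g)) :
    IsUnit g := by
  have hH0 : Hpoly a ≠ 0 := by
    intro h0
    apply (fpoly_irreducible a ha).ne_zero
    rw [← hPhiH a, h0, map_zero]
  have hg0 : g ≠ 0 := by rintro rfl; rw [zero_mul] at hgh; exact hH0 hgh
  have hh0 : h ≠ 0 := by rintro rfl; rw [mul_zero] at hgh; exact hH0 hgh
  have hug : IsUnit ((aeval (wsub : Fin 5 → MvPolynomial (Fin 3) Ω)) g) := by
    have h2 := hu.map F3.symm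
    rw [← hcomp g, AlgEquiv.symm_apply_apply] at h2
    exact h2
  have hdg : ((aeval (wsub : Fin 5 → MvPolynomial (Fin 3) Ω)) g).totalDegree = 0 := unit_deg hug
  have hPdeg := P_deg a ha
  have hmul : (aeval (wsub : Fin 5 → MvPolynomial (Fin 3) Ω)) (Hpoly a)
      = (aeval wsub) g * (aeval wsub) h := by rw [hgh, map_mul]
  have h5 : 5 ≤ ((aeval (wsub : Fin 5 → MvPolynomial (Fin 3) Ω)) h).totalDegree := by
    have h3 := MvPolynomial.totalDegree_mul ((aeval (wsub : Fin 5 → MvPolynomial (Fin 3) Ω)) g)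
      ((aeval wsub) h)
    rw [← hmul, hPdeg, hdg] at h3
    omega
  have h5' : 5 ≤ h.totalDegree := le_trans h5 (totalDegree_aeval_le _ wsub_deg h)
  have hsum : g.totalDegree + h.totalDegree ≤ 5 := by
    rw [← totalDegree_mul_eq hg0 hh0, ← hgh]
    exact Hpoly_deg_le a
  have hgdeg : g.totalDegree = 0 := by omega
  have hgC := eq_C_of_totalDegree_eq_zero hgdeg
  have hc0 : MvPolynomial.coeff 0 g ≠ 0 := by
    rintro hc; rw [hc, map_zero] at hgC; exact hg0 hgC
  rw [hgC]
  exact (isUnit_iff_ne_zero.mpr hc0).map (MvPolynomial.C : Ω →+* MvPolynomial (Fin 5) Ω)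

lemma Hpoly_irreducible (a : Ω) (ha : a ≠ 0) : Irreducible (Hpoly a) := by
  constructor
  · intro hu
    apply (fpoly_irreducible a ha).not_isUnit
    rw [← hPhiH a]
    exact hu.map (aeval (vsub : Fin 5 → Polynomial (Polynomial (Polynomial Ω))))
  · intro g h hgh
    have hfac : fpoly a = (aeval (vsub : Fin 5 → Polynomial (Polynomial (Polynomial Ω)))) g
        * (aeval vsub) h := by
      rw [← hPhiH a, hgh, map_mul]
    rcases (fpoly_irreducible a ha).isUnit_or_isUnit hfac with hu | hu
    · exact Or.inl (side a ha g h hgh hu)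
    · exact Or.inr (side a ha h g (by rw [hgh, mul_comm]) hu)

end StmtAux3

open MvPolynomial in
theorem stmt_2 (q : ℕ) (hq : ∃ p n : ℕ, Nat.Prime p ∧ 0 < n ∧ q = p ^ n)
    (Ω : Type*) [Field Ω] [IsAlgClosed Ω]
    (F : Subfield Ω) (hFcard : Nat.card F = q)
    (a : Ω) (haF : a ∈ F) (ha : a ≠ 0) :
    Irreducible
      (((X 2 - X 0) * (X 3 - X 1) * (X 4 - X 2) * (X 0 - X 3) * (X 1 - X 4)
        - C a * ((X 1 - X 0) * (X 2 - X 1) * (X 3 - X 2) * (X 4 - X 3) * (X 0 - X 4)))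
        : MvPolynomial (Fin 5) Ω) :=
  StmtAux3.Hpoly_irreducible a ha
end

section
/- Let α, β ∈ K. There exists a nonzero x ∈ K with x = α x^{q^2} and x^q = β x^{q^2} (equivalently, the F-linear map T_{α,β} is not injective, i.e. the linear set L_{α,β} has rank less than five) if and only if α^q = β^{q+1}, N(α) = 1 and N(β) = 1. -/
theorem stmt_4 (q : ℕ) (hq : ∃ p n : ℕ, Nat.Prime p ∧ 0 < n ∧ q = p ^ n)
    (K : Type*) [Field K] (F : Subfield K)
    (hFcard : Nat.card F = q) (hKcard : Nat.card K = q ^ 5)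
    (α β : K) :
    (∃ x : K, x ≠ 0 ∧ x = α * x ^ q ^ 2 ∧ x ^ q = β * x ^ q ^ 2) ↔
      (α ^ q = β ^ (q + 1) ∧ α ^ (1 + q + q ^ 2 + q ^ 3 + q ^ 4) = 1 ∧
        β ^ (1 + q + q ^ 2 + q ^ 3 + q ^ 4) = 1) := by
  obtain ⟨p, n, hp, hn, hqe⟩ := hq
  have hq2 : 2 ≤ q := by
    calc 2 = 2 ^ 1 := rfl
      _ ≤ p ^ 1 := Nat.pow_le_pow_left hp.two_le 1
      _ ≤ p ^ n := Nat.pow_le_pow_right hp.pos hn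
      _ = q := hqe.symm
  haveI : Finite K := Nat.finite_of_card_ne_zero (by rw [hKcard]; positivity)
  haveI : Fintype K := Fintype.ofFinite K
  have hcard : Fintype.card K = q ^ 5 := by rw [← Nat.card_eq_fintype_card, hKcard]
  have hq5 : ∀ z : K, z ^ q ^ 5 = z := fun z => by rw [← hcard]; exact FiniteField.pow_card z
  -- characteristic
  have hrp : (ringChar K).Prime := CharP.char_is_prime K (ringChar K)
  haveI : Fact (ringChar K).Prime := ⟨hrp⟩
  obtain ⟨m, -, hm⟩ := FiniteField.card K (ringChar K)
  have hrpp : ringChar K = p := by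
    have hdvd : ringChar K ∣ p ^ (n * 5) := by
      rw [pow_mul, ← hqe, ← hcard, hm]
      exact dvd_pow_self _ (by exact_mod_cast m.ne_zero)
    exact (Nat.prime_dvd_prime_iff_eq hrp hp).mp (hrp.dvd_of_dvd_pow hdvd)
  -- Frobenius injectivity
  have hinj : ∀ a b : K, a ^ q = b ^ q → a = b := by
    intro a b hab
    have hz : (a - b) ^ q = 0 := by
      rw [hqe, ← hrpp, sub_pow_char_pow, hrpp, ← hqe, hab, sub_self]
    have := pow_eq_zero_iff (n := q) (by omega) |>.mp hz
    exact sub_eq_zero.mp this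
  -- helper: iterated powers
  have pp : ∀ (z : K) (a b : ℕ), (z ^ q ^ a) ^ q ^ b = z ^ q ^ (a + b) := by
    intro z a b; rw [← pow_mul, ← pow_add]
  constructor
  · rintro ⟨x, hx, h1, h2⟩
    have hxp : ∀ k : ℕ, x ^ q ^ k ≠ 0 := fun k => pow_ne_zero _ hx
    -- E i : x ^ q^(i+1) = β ^ q^i * x ^ q^(i+2)
    have E : ∀ i : ℕ, x ^ q ^ (i + 1) = β ^ q ^ i * x ^ q ^ (i + 2) := by
      intro i
      have h2' := congrArg (· ^ q ^ i) h2
      simp only [mul_pow] at h2'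
      calc x ^ q ^ (i + 1) = (x ^ q) ^ q ^ i := by
            rw [← pow_mul, pow_succ, mul_comm (q ^ i) q]
        _ = β ^ q ^ i * (x ^ q ^ 2) ^ q ^ i := h2'
        _ = β ^ q ^ i * x ^ q ^ (i + 2) := by rw [pp, Nat.add_comm]
    have chain : x ^ q ^ 1 = (β ^ q ^ 0 * β ^ q ^ 1 * β ^ q ^ 2 * β ^ q ^ 3 * β ^ q ^ 4) *
        x ^ q ^ 6 := by
      rw [E 0, E 1, E 2, E 3, E 4]; ring
    have hx6 : x ^ q ^ 6 = x ^ q ^ 1 := by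
      have h6 : x ^ q ^ 6 = (x ^ q ^ 5) ^ q ^ 1 := by rw [pp]
      rw [h6, hq5]
    rw [hx6] at chain
    have hbN : β ^ (1 + q + q ^ 2 + q ^ 3 + q ^ 4) = 1 := by
      have hcc := mul_right_cancel₀ (hxp 1) (chain.symm.trans (one_mul (x ^ q ^ 1)).symm)
      rw [← hcc]
      rw [pow_add, pow_add, pow_add, pow_add, pow_zero, pow_one]
      ring
    -- α^q = β^(q+1)
    have e1 : x ^ q = α ^ q * x ^ q ^ 3 := by
      have h1' := congrArg (· ^ q) h1
      simp only [mul_pow] at h1'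
      calc x ^ q = α ^ q * (x ^ q ^ 2) ^ q := h1'
        _ = α ^ q * x ^ q ^ 3 := by rw [← pow_mul, show q ^ 2 * q = q ^ 3 from by ring]
    have e2 : x ^ q ^ 2 = β ^ q * x ^ q ^ 3 := by
      have := E 1
      simpa [pow_one] using this
    have e3 : x ^ q = β ^ (q + 1) * x ^ q ^ 3 := by
      calc x ^ q = β * x ^ q ^ 2 := h2
        _ = β * (β ^ q * x ^ q ^ 3) := by rw [e2]
        _ = β ^ (q + 1) * x ^ q ^ 3 := by rw [pow_add, pow_one]; ring
    have hA : α ^ q = β ^ (q + 1) := mul_right_cancel₀ (hxp 3) (e1.symm.trans e3)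
    refine ⟨hA, ?_, hbN⟩
    apply hinj
    rw [one_pow, ← pow_mul, mul_comm (1 + q + q ^ 2 + q ^ 3 + q ^ 4) q, pow_mul, hA,
      ← pow_mul, mul_comm (q + 1) (1 + q + q ^ 2 + q ^ 3 + q ^ 4),
      pow_mul, hbN, one_pow]
  · rintro ⟨h1, h2, h3⟩
    have hβ0 : β ≠ 0 := by
      rintro rfl
      rw [zero_pow (by positivity)] at h3
      exact zero_ne_one h3
    have hα0 : α ≠ 0 := by
      rintro rfl
      rw [zero_pow (by positivity)] at h2
      exact zero_ne_one h2
    -- α = β ^ (q^4) * β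
    have hαβ : α = β ^ q ^ 4 * β := by
      apply hinj
      rw [h1, mul_pow, ← pow_mul, show q ^ 4 * q = q ^ 5 from by ring, hq5, pow_add, pow_one]
      ring
    -- Hilbert 90 style
    have hN5 : (q - 1) * (1 + q + q ^ 2 + q ^ 3 + q ^ 4) = q ^ 5 - 1 := by
      obtain ⟨q', rfl⟩ : ∃ q', q = q' + 1 := ⟨q - 1, by omega⟩
      simp only [Nat.add_sub_cancel]
      apply Nat.eq_sub_of_add_eq
      ring
    obtain ⟨g, hg⟩ := IsCyclic.exists_generator (α := Kˣ)
    have hog : orderOf g = q ^ 5 - 1 := by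
      rw [orderOf_eq_card_of_forall_mem_zpowers hg, Nat.card_units, hKcard]
    -- the element c
    set c : K := (β ^ q ^ 4)⁻¹ with hc
    have hc0 : c ≠ 0 := inv_ne_zero (pow_ne_zero _ hβ0)
    have hcN : c ^ (1 + q + q ^ 2 + q ^ 3 + q ^ 4) = 1 := by
      rw [hc, inv_pow, ← pow_mul, mul_comm (q ^ 4), pow_mul, h3, one_pow, inv_one]
    set u : Kˣ := Units.mk0 c hc0 with hu
    have huN : u ^ (1 + q + q ^ 2 + q ^ 3 + q ^ 4) = 1 := by
      refine Units.ext ?_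
      rw [Units.val_pow_eq_pow_val, Units.val_one]
      exact hcN
    obtain ⟨k, hk⟩ := mem_powers_iff_mem_zpowers.mpr (hg u)
    dsimp only at hk
    have hdvd : (q - 1) * (1 + q + q ^ 2 + q ^ 3 + q ^ 4) ∣
        k * (1 + q + q ^ 2 + q ^ 3 + q ^ 4) := by
      rw [hN5, ← hog]
      apply orderOf_dvd_of_pow_eq_one
      rw [pow_mul, hk, huN]
    have hdvd' : (q - 1) ∣ k :=
      (Nat.mul_dvd_mul_iff_right (by positivity)).mp hdvd
    obtain ⟨j, hj⟩ := hdvd'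
    have hyc : ((g ^ j : Kˣ) : K) ^ (q - 1) = c := by
      have hju : (g ^ j) ^ (q - 1) = u := by rw [← pow_mul, mul_comm, ← hj, hk]
      calc ((g ^ j : Kˣ) : K) ^ (q - 1) = (((g ^ j) ^ (q - 1) : Kˣ) : K) :=
            (Units.val_pow_eq_pow_val _ _).symm
        _ = c := by rw [hju]; rfl
    set x : K := ((g ^ j : Kˣ) : K) with hxdef
    have hx0 : x ≠ 0 := Units.ne_zero _
    have hxq : x ^ q = c * x := by
      calc x ^ q = x ^ (q - 1 + 1) := by congr 1; omega
        _ = x ^ (q - 1) * x := by rw [pow_succ]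
        _ = c * x := by rw [hyc]
    have hcqv : c ^ q = β⁻¹ := by
      rw [hc, inv_pow, ← pow_mul, show q ^ 4 * q = q ^ 5 from by ring, hq5]
    have hxq2 : x ^ q ^ 2 = β⁻¹ * x ^ q := by
      have hsq : x ^ q ^ 2 = (x ^ q) ^ q := by rw [← pow_mul, pow_two]
      rw [hsq, hxq, mul_pow, hcqv, hxq]
    refine ⟨x, hx0, ?_, ?_⟩
    · rw [hxq2, hxq, hαβ, hc]
      field_simp
    · rw [hxq2, mul_inv_cancel_left₀ hβ0]
end

section
/- Let α, β ∈ K with αβ ≠ 0 and α^q ≠ β^{q+1}. If α^{q^4} β^{q^2+q+1} − α^{q^4+q^2} β − α^{q^4+q} β^{q^2} + N(α) − β^q α^{q^3+1} + 1 = 0, then α^q/β^{q+1} ∈ F, i.e. (α^q/β^{q+1})^q = α^q/β^{q+1}. -/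
theorem stmt_10 (q : ℕ) (hq : ∃ p n : ℕ, Nat.Prime p ∧ 0 < n ∧ q = p ^ n)
    (K : Type*) [Field K] (F : Subfield K)
    (hFcard : Nat.card F = q) (hKcard : Nat.card K = q ^ 5)
    (α β : K) (hαβ : α * β ≠ 0) (hne : α ^ q ≠ β ^ (q + 1))
    (heq : α ^ q ^ 4 * β ^ (q ^ 2 + q + 1) - α ^ (q ^ 4 + q ^ 2) * β
        - α ^ (q ^ 4 + q) * β ^ q ^ 2 + α ^ (1 + q + q ^ 2 + q ^ 3 + q ^ 4)
        - β ^ q * α ^ (q ^ 3 + 1) + 1 = 0) :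
    (α ^ q / β ^ (q + 1)) ^ q = α ^ q / β ^ (q + 1) := by
  obtain ⟨p, n, hp, hn, hqpn⟩ := hq
  have hq2 : 2 ≤ q := hqpn ▸ Nat.one_lt_pow hn.ne' hp.two_le
  have hq0 : q ≠ 0 := by omega
  haveI : Finite K := Nat.finite_of_card_ne_zero (by rw [hKcard]; positivity)
  haveI := Fintype.ofFinite K
  have hcard : Fintype.card K = q ^ 5 := by rw [← Nat.card_eq_fintype_card, hKcard]
  -- characteristic
  obtain ⟨r, hrC⟩ := CharP.exists K
  haveI : CharP K r := hrC
  obtain ⟨m, hrp, hcard'⟩ := FiniteField.card K r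
  have hpr : p = r := by
    have hdvd : p ∣ r ^ (m : ℕ) := by
      rw [← hcard', hcard, hqpn, ← pow_mul]
      exact dvd_pow_self p (by positivity)
    exact ((Nat.prime_dvd_prime_iff_eq hp hrp).mp (hp.dvd_of_dvd_pow hdvd))
  haveI : CharP K p := hpr ▸ hrC
  haveI : Fact p.Prime := ⟨hp⟩
  haveI : ExpChar K p := ExpChar.prime hp
  set φ : K →+* K := iterateFrobenius K p n with hφdef
  have hφ : ∀ z : K, φ z = z ^ q := fun z => by
    rw [hφdef, iterateFrobenius_def, ← hqpn]
  have hq5 : ∀ z : K, z ^ q ^ 5 = z := fun z => by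
    rw [← hcard, FiniteField.pow_card]
  have hc : ∀ z : K, (z ^ q) ^ q ^ 4 = z := fun z => by
    rw [← pow_mul, show q * q ^ 4 = q ^ 5 by ring, hq5]
  have hα : α ≠ 0 := fun h => hαβ (by rw [h, zero_mul])
  have hβ : β ≠ 0 := fun h => hαβ (by rw [h, mul_zero])
  -- rewrite heq in product form
  have heqE : α ^ q ^ 4 * (β ^ q ^ 2 * β ^ q * β) - α ^ q ^ 4 * α ^ q ^ 2 * β
      - α ^ q ^ 4 * α ^ q * β ^ q ^ 2
      + α * α ^ q * α ^ q ^ 2 * α ^ q ^ 3 * α ^ q ^ 4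
      - β ^ q * (α ^ q ^ 3 * α) + 1 = 0 := by linear_combination heq
  -- apply Frobenius
  have h2 := congrArg φ heqE
  simp only [map_add, map_sub, map_mul, map_one, map_zero, map_pow] at h2
  simp only [hφ] at h2
  rw [hc α] at h2
  -- key factorization : (E - E^q) = (a4 b0 - a0 b3)(b1 b2 - a2)
  have hne2 : (β ^ q) ^ q * β ^ q - (α ^ q) ^ q ≠ 0 := by
    intro h0
    apply hne
    have h1 : φ (β ^ q * β - α ^ q) = 0 := by
      simp only [map_sub, map_mul, map_pow]
      simp only [hφ]
      linear_combination h0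
    have h3 : β ^ q * β - α ^ q = 0 := φ.injective (by rw [map_zero]; exact h1)
    linear_combination -h3
  have key : (α ^ q ^ 4 * β - α * β ^ q ^ 3) * ((β ^ q) ^ q * β ^ q - (α ^ q) ^ q) = 0 := by
    linear_combination heqE - h2
  have key2 : α ^ q ^ 4 * β = α * β ^ q ^ 3 := by
    rcases mul_eq_zero.mp key with h | h
    · linear_combination h
    · exact absurd h hne2
  -- raise to the q^2 power
  have key3 : α ^ q * β ^ q ^ 2 = α ^ q ^ 2 * β := by
    have h3 := congrArg (fun z : K => z ^ q ^ 2) key2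
    simp only [mul_pow, ← pow_mul] at h3
    rw [show q ^ 4 * q ^ 2 = q ^ 5 * q by ring, show q ^ 3 * q ^ 2 = q ^ 5 by ring,
      pow_mul, hq5 α, hq5 β] at h3
    exact h3
  have hβpow : β ^ (q + 1) ≠ 0 := pow_ne_zero _ hβ
  rw [div_pow, div_eq_div_iff (pow_ne_zero _ hβpow) hβpow]
  rw [← pow_mul, ← pow_mul]
  linear_combination (-(β ^ q)) * key3
end

section
/- Let β ∈ K with β ≠ 0, let λ ∈ F with λ ≠ 0, and let α ∈ K satisfy α^q = λ β^{q+1}. Then α^{q^4} β^{q^2+q+1} − α^{q^4+q^2} β − α^{q^4+q} β^{q^2} + N(α) − β^q α^{q^3+1} + 1 = 0 holds if and only if λ^5 N(β)^2 + λ(1 − 3λ) N(β) + 1 = 0. -/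
theorem stmt_11 (q : ℕ) (hq : ∃ p n : ℕ, Nat.Prime p ∧ 0 < n ∧ q = p ^ n)
    (K : Type*) [Field K] (F : Subfield K)
    (hFcard : Nat.card F = q) (hKcard : Nat.card K = q ^ 5)
    (β : K) (hβ : β ≠ 0) (l : K) (hlF : l ∈ F) (hl0 : l ≠ 0)
    (α : K) (hα : α ^ q = l * β ^ (q + 1)) :
    (α ^ q ^ 4 * β ^ (q ^ 2 + q + 1) - α ^ (q ^ 4 + q ^ 2) * β
        - α ^ (q ^ 4 + q) * β ^ q ^ 2 + α ^ (1 + q + q ^ 2 + q ^ 3 + q ^ 4)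
        - β ^ q * α ^ (q ^ 3 + 1) + 1 = 0) ↔
      l ^ 5 * (β ^ (1 + q + q ^ 2 + q ^ 3 + q ^ 4)) ^ 2 +
        l * (1 - 3 * l) * β ^ (1 + q + q ^ 2 + q ^ 3 + q ^ 4) + 1 = 0 := by
  obtain ⟨p, n, hp, hn, hqpn⟩ := hq
  have hq0 : 0 < q := hqpn ▸ pow_pos hp.pos n
  have hKfin : Finite K := by
    have h : 0 < Nat.card K := hKcard ▸ pow_pos hq0 5
    exact (Nat.card_pos_iff.mp h).2
  have hFfin : Finite F := by
    have h : 0 < Nat.card F := hFcard ▸ hq0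
    exact (Nat.card_pos_iff.mp h).2
  haveI := Fintype.ofFinite K
  haveI := Fintype.ofFinite F
  have hKc : Fintype.card K = q ^ 5 := by rw [← Nat.card_eq_fintype_card, hKcard]
  have hFc : Fintype.card F = q := by rw [← Nat.card_eq_fintype_card, hFcard]
  have hl : l ^ q = l := by
    have h := FiniteField.pow_card (⟨l, hlF⟩ : F)
    rw [hFc] at h
    have := congrArg (Subfield.subtype F) h
    simpa using this
  have hβ5 : β ^ (q ^ 5) = β := by
    have h := FiniteField.pow_card β; rwa [hKc] at h
  have hα5 : α ^ (q ^ 5) = α := by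
    have h := FiniteField.pow_card α; rwa [hKc] at h
  have h2 : α ^ (q ^ 2) = l * β ^ (q ^ 2 + q) := by
    rw [show q ^ 2 = q * q from sq q, pow_mul, hα, mul_pow, hl, ← pow_mul]; ring
  have h3 : α ^ (q ^ 3) = l * β ^ (q ^ 3 + q ^ 2) := by
    rw [show q ^ 3 = q ^ 2 * q from by ring, pow_mul, h2, mul_pow, hl, ← pow_mul]; ring
  have h4 : α ^ (q ^ 4) = l * β ^ (q ^ 4 + q ^ 3) := by
    rw [show q ^ 4 = q ^ 3 * q from by ring, pow_mul, h3, mul_pow, hl, ← pow_mul]; ring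
  have e0 : α = l * (β * β ^ (q ^ 4)) := by
    rw [← hα5, show q ^ 5 = q ^ 4 * q from by ring, pow_mul, h4, mul_pow, hl, ← pow_mul,
      show (q ^ 4 + q ^ 3) * q = q ^ 5 + q ^ 4 from by ring, pow_add, hβ5]
  have key : α ^ q ^ 4 * β ^ (q ^ 2 + q + 1) - α ^ (q ^ 4 + q ^ 2) * β
        - α ^ (q ^ 4 + q) * β ^ q ^ 2 + α ^ (1 + q + q ^ 2 + q ^ 3 + q ^ 4)
        - β ^ q * α ^ (q ^ 3 + 1) + 1 =
      l ^ 5 * (β ^ (1 + q + q ^ 2 + q ^ 3 + q ^ 4)) ^ 2 +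
        l * (1 - 3 * l) * β ^ (1 + q + q ^ 2 + q ^ 3 + q ^ 4) + 1 := by
    simp only [pow_add, pow_one]
    rw [h4, h3, h2, hα, e0]
    ring
  rw [key]
end

section
/- Let k be a field and let λ, N ∈ k with λ ≠ 0 and λ ≠ 1. Then it is impossible that both N^8 λ^{10} (1−λ)^{10} − N^4 λ^5 (1−λ)^5 (λ^2 N − 1)^5 + (λ^2 N − 1)^{10} = 0 and λ^5 N^2 + λ(1 − 3λ) N + 1 = 0 hold. (The resultant of these two polynomials with respect to N is λ^{28}(λ−1)^{22}.) -/
set_option maxHeartbeats 2000000 in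
theorem stmt_14 (k : Type*) [Field k] (l n : k) (hl0 : l ≠ 0) (hl1 : l ≠ 1) :
    ¬ (n ^ 8 * l ^ 10 * (1 - l) ^ 10 -
          n ^ 4 * l ^ 5 * (1 - l) ^ 5 * (l ^ 2 * n - 1) ^ 5 +
          (l ^ 2 * n - 1) ^ 10 = 0 ∧
        l ^ 5 * n ^ 2 + l * (1 - 3 * l) * n + 1 = 0) := by
  rintro ⟨hP, hQ⟩
  have key : (((1 : k) + (-23 : k) * l + (231 : k) * l ^ 2 + (-1330 : k) * l ^ 3 + (4845 : k) * l ^ 4 + (-11628 : k) * l ^ 5 + (18564 : k) * l ^ 6 + (-19448 : k) * l ^ 7 + (12870 : k) * l ^ 8 + (-5005 : k) * l ^ 9 + (1001 : k) * l ^ 10 + (-78 : k) * l ^ 11 + (1 : k) * l ^ 12) + ((1 : k) * l ^ 4 + (-20 : k) * l ^ 5 + (171 : k) * l ^ 6 + (-816 : k) * l ^ 7 + (2380 : k) * l ^ 8 + (-4368 : k) * l ^ 9 + (5005 : k) * l ^ 10 + (-3432 : k) * l ^ 11 + (1287 : k) * l ^ 12 + (-220 : k) * l ^ 13 + (11 :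 k) * l ^ 14) * n) *
      (n ^ 8 * l ^ 10 * (1 - l) ^ 10 -
        n ^ 4 * l ^ 5 * (1 - l) ^ 5 * (l ^ 2 * n - 1) ^ 5 +
        (l ^ 2 * n - 1) ^ 10) +
      (((11 : k) * l + (-165 : k) * l ^ 2 + (1110 : k) * l ^ 3 + (-4350 : k) * l ^ 4 + (10836 : k) * l ^ 5 + (-17640 : k) * l ^ 6 + (18656 : k) * l ^ 7 + (-12375 : k) * l ^ 8 + (4785 : k) * l ^ 9 + (-935 : k) * l ^ 10 + (66 : k) * l ^ 11) + ((-1 : k) * l ^ 2 + (-32 : k) * l ^ 3 + (704 : k) * l ^ 4 + (-5600 : k) * l ^ 5 + (24393 : k) * l ^ 6 + (-65316 : k) * l ^ 7 + (111684 : k) * l ^ 8 + (-121769 : k) * l ^ 9 + (81785 : k) * l ^ 10 + (-31328 : k) * l ^ 11 + (5852 : k) * l ^ 12 + (-362 : k) * l ^ 13 + (-1 : k) * l ^ 14) * n + ((1 : k) * l ^ 3 + (-16 : k) * l ^ 4 + (235 : k) * l ^ 5 + (-2684 : k) * l ^ 6 + (18622 : k) * l ^ 7 + (-78930 : k) * l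 ^ 8 + (211818 : k) * l ^ 9 + (-365595 : k) * l ^ 10 + (402028 : k) * l ^ 11 + (-271073 : k) * l ^ 12 + (103444 : k) * l ^ 13 + (-19042 : k) * l ^ 14 + (1160 : k) * l ^ 15 + (-4 : k) * l ^ 16) * n ^ 2 + ((-1 : k) * l ^ 4 + (19 : k) * l ^ 5 + (-163 : k) * l ^ 6 + (630 : k) * l ^ 7 + (1033 : k) * l ^ 8 + (-24608 : k) * l ^ 9 + (130697 : k) * l ^ 10 + (-381984 : k) * l ^ 11 + (687083 : k) * l ^ 12 + (-771727 : k) * l ^ 13 + (524281 : k) * l ^ 14 + (-198571 : k) * l ^ 15 + (35247 : k) * l ^ 16 + (-1828 : k) * l ^ 17 + (-25 : k) * l ^ 18 + (1 : k) * l ^ 19) * n ^ 3 + ((6 : k) * l ^ 6 + (-136 : k) * l ^ 7 + (1395 : k) * l ^ 8 + (-8337 : k) * l ^ 9 + (30661 : k) * l ^ 10 + (-64569 : k) * l ^ 11 + (42402 : k) * l ^ 12 + (152270 : k) * l ^ 13 + (-479222 : k) * l ^ 14 + (632399 : k) * l ^ 15 + (-433077 : k) * l ^ 16 + (135074 : k)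 * l ^ 17 + (-2955 : k) * l ^ 18 + (-7237 : k) * l ^ 19 + (1275 : k) * l ^ 20 + (-76 : k) * l ^ 21 + (1 : k) * l ^ 22) * n ^ 4 + ((-1 : k) * l ^ 7 + (14 : k) * l ^ 8 + (-23 : k) * l ^ 9 + (-845 : k) * l ^ 10 + (8614 : k) * l ^ 11 + (-42090 : k) * l ^ 12 + (121683 : k) * l ^ 13 + (-208582 : k) * l ^ 14 + (174684 : k) * l ^ 15 + (28135 : k) * l ^ 16 + (-197048 : k) * l ^ 17 + (146672 : k) * l ^ 18 + (-13093 : k) * l ^ 19 + (-27235 : k) * l ^ 20 + (10134 : k) * l ^ 21 + (-837 : k) * l ^ 22 + (-64 : k) * l ^ 23 + (8 : k) * l ^ 24) * n ^ 5 + ((1 : k) * l ^ 8 + (-27 : k) * l ^ 9 + (345 : k) * l ^ 10 + (-2785 : k) * l ^ 11 + (15902 : k) * l ^ 12 + (-67628 : k) * l ^ 13 + (218511 : k) * l ^ 14 + (-537215 : k) * l ^ 15 + (997376 : k) * l ^ 16 + (-1387687 : k) * l ^ 17 + (1454163 : k) * l ^ 18 + (-1187325 : k) * l ^ 19 + (799415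 : k) * l ^ 20 + (-446801 : k) * l ^ 21 + (187651 : k) * l ^ 22 + (-51981 : k) * l ^ 23 + (8877 : k) * l ^ 24 + (-930 : k) * l ^ 25 + (55 : k) * l ^ 26 + (-1 : k) * l ^ 27) * n ^ 6 + ((-1 : k) * l ^ 9 + (30 : k) * l ^ 10 + (-416 : k) * l ^ 11 + (3541 : k) * l ^ 12 + (-20721 : k) * l ^ 13 + (88477 : k) * l ^ 14 + (-285720 : k) * l ^ 15 + (714664 : k) * l ^ 16 + (-1409761 : k) * l ^ 17 + (2227222 : k) * l ^ 18 + (-2853592 : k) * l ^ 19 + (2980290 : k) * l ^ 20 + (-2518395 : k) * l ^ 21 + (1691524 : k) * l ^ 22 + (-889056 : k) * l ^ 23 + (363877 : k) * l ^ 24 + (-114515 : k) * l ^ 25 + (26197 : k) * l ^ 26 + (-3928 : k) * l ^ 27 + (330 : k) * l ^ 28 + (-11 : k) * l ^ 29) * n ^ 7 + ((1 : k) * l ^ 14 + (-25 : k) * l ^ 15 + (281 : k) * l ^ 16 + (-1871 : k) * l ^ 17 + (8176 : k) * l ^ 18 + (-24546 : k) * l ^ 19 + (51640 : k) * l ^ 20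 + (-76843 : k) * l ^ 21 + (82214 : k) * l ^ 22 + (-66482 : k) * l ^ 23 + (44298 : k) * l ^ 24 + (-24750 : k) * l ^ 25 + (10022 : k) * l ^ 26 + (-2388 : k) * l ^ 27 + (275 : k) * l ^ 28 + (-11 : k) * l ^ 29) * n ^ 8 + ((-1 : k) * l ^ 19 + (20 : k) * l ^ 20 + (-171 : k) * l ^ 21 + (816 : k) * l ^ 22 + (-2380 : k) * l ^ 23 + (4368 : k) * l ^ 24 + (-5005 : k) * l ^ 25 + (3432 : k) * l ^ 26 + (-1287 : k) * l ^ 27 + (220 : k) * l ^ 28 + (-11 : k) * l ^ 29) * n ^ 9) *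
      (l ^ 5 * n ^ 2 + l * (1 - 3 * l) * n + 1) = (l - 1) ^ 12 := by
    ring
  rw [hP, hQ] at key
  simp only [mul_zero, zero_add, add_zero] at key
  have h12 : (l - 1) ^ 12 = 0 := key.symm
  have : l - 1 = 0 := pow_eq_zero_iff (by norm_num : (12:ℕ) ≠ 0) |>.mp h12
  exact hl1 (sub_eq_zero.mp this)
end

section
/- Let η ∈ K with η ≠ 0 and N(η)^2 − N(η) + 1 = 0. Then there do not exist λ ∈ F with λ ≠ 0 and λ ≠ 1 and β ∈ K with β ≠ 0 such that (λ^2 N(β) − 1) · η = λ(1 − λ) β^{q^3+q^2+q+1} and λ^5 N(β)^2 + λ(1 − 3λ) N(β) + 1 = 0. (Consequently, a Sheekey linear set L_2^η with N(η)^2 − N(η) + 1 = 0 is not of the form L_{α,β}.) -/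
lemma aux_resultant {K : Type*} [Field K] (n l N : K)
    (h1 : n ^ 2 - n + 1 = 0)
    (h2 : l ^ 5 * N ^ 2 + l * (1 - 3 * l) * N + 1 = 0)
    (h3 : (l ^ 2 * N - 1) ^ 5 * n = l ^ 5 * (1 - l) ^ 5 * N ^ 4)
    (hl0 : l ≠ 0) (hl1 : l ≠ 1) : False := by
  have key : n * l ^ 14 * (1 - l) ^ 11 = 0 := by
    linear_combination ((1 : K) * l ^ 15 + (-10 : K) * l ^ 16 + (-1 : K) * l ^ 16 * N + (45 : K) * l ^ 17 + (13 : K) * l ^ 17 * N + (1 : K) * l ^ 17 * N ^ 2 + (-120 : K) * l ^ 18 + (-75 : K) * l ^ 18 * N + (-16 : K) * l ^ 18 * N ^ 2 + (-1 : K) * l ^ 18 * N ^ 3 + (210 : K) * l ^ 19 + (255 : K) * l ^ 19 * N + (114 : K) * l ^ 19 * N ^ 2 + (19 : K) * l ^ 19 * N ^ 3 + (-252 : K) * l ^ 20 + (-570 : K) * l ^ 20 * N + (-481 : K) * l ^ 20 * N ^ 2 + (-162 : K) * l ^ 20 * N ^ 3 + (210 : K) * l ^ 21 + (882 : K) * l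 ^ 21 * N + (1345 : K) * l ^ 21 * N ^ 2 + (824 : K) * l ^ 21 * N ^ 3 + (-120 : K) * l ^ 22 + (-966 : K) * l ^ 22 * N + (-2637 : K) * l ^ 22 * N ^ 2 + (-2801 : K) * l ^ 22 * N ^ 3 + (45 : K) * l ^ 23 + (750 : K) * l ^ 23 * N + (3732 : K) * l ^ 23 * N ^ 2 + (6747 : K) * l ^ 23 * N ^ 3 + (-10 : K) * l ^ 24 + (-405 : K) * l ^ 24 * N + (-3858 : K) * l ^ 24 * N ^ 2 + (-11898 : K) * l ^ 24 * N ^ 3 + (1 : K) * l ^ 25 + (145 : K) * l ^ 25 * N + (2907 : K) * l ^ 25 * N ^ 2 + (15624 : K) * l ^ 25 * N ^ 3 + (-31 : K) * l ^ 26 * N + (-1570 : K) * l ^ 26 * N ^ 2 + (-15363 : K) * l ^ 26 * N ^ 3 + (3 : K) * l ^ 27 * N + (586 : K) * l ^ 27 * N ^ 2 + (11257 : K) * l ^ 27 * N ^ 3 + (-141 : K) * l ^ 28 * N ^ 2 + (-6046 : K) * l ^ 28 * N ^ 3 + (19 : K) * l ^ 29 * N ^ 2 + (2304 : K) * l ^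 29 * N ^ 3 + (-1 : K) * l ^ 30 * N ^ 2 + (-587 : K) * l ^ 30 * N ^ 3 + (89 : K) * l ^ 31 * N ^ 3 + (-6 : K) * l ^ 32 * N ^ 3 + (5 : K) * n * l ^ 15 + (-59 : K) * n * l ^ 16 + (301 : K) * n * l ^ 17 + (-11 : K) * n * l ^ 17 * N + (-869 : K) * n * l ^ 18 + (141 : K) * n * l ^ 18 * N + (1 : K) * n * l ^ 18 * N ^ 2 + (1561 : K) * n * l ^ 19 + (-769 : K) * n * l ^ 19 * N + (-4 : K) * n * l ^ 19 * N ^ 2 + (-1 : K) * n * l ^ 19 * N ^ 3 + (-1804 : K) * n * l ^ 20 + (2345 : K) * n * l ^ 20 * N + (-48 : K) * n * l ^ 20 * N ^ 2 + (17 : K) * n * l ^ 20 * N ^ 3 + (1334 : K) * n * l ^ 21 + (-4414 : K) * n * l ^ 21 * N + (447 : K) * n * l ^ 21 * N ^ 2 + (-134 : K) * n * l ^ 21 * N ^ 3 + (-601 : K) * n * l ^ 22 + (5328 : K) * n * l ^ 22 * N + (-1632 : K) * n * l ^ 22 * N ^ 2 + (650 : K) * n * l ^ 22 * N ^ 3 +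 (144 : K) * n * l ^ 23 + (-4131 : K) * n * l ^ 23 * N + (3309 : K) * n * l ^ 23 * N ^ 2 + (-2138 : K) * n * l ^ 23 * N ^ 3 + (1 : K) * n * l ^ 23 * N ^ 4 + (-11 : K) * n * l ^ 24 + (1989 : K) * n * l ^ 24 * N + (-4046 : K) * n * l ^ 24 * N ^ 2 + (4934 : K) * n * l ^ 24 * N ^ 3 + (-14 : K) * n * l ^ 24 * N ^ 4 + (-1 : K) * n * l ^ 25 + (-545 : K) * n * l ^ 25 * N + (2982 : K) * n * l ^ 25 * N ^ 2 + (-8062 : K) * n * l ^ 25 * N ^ 3 + (82 : K) * n * l ^ 25 * N ^ 4 + (69 : K) * n * l ^ 26 * N + (-1212 : K) * n * l ^ 26 * N ^ 2 + (9314 : K) * n * l ^ 26 * N ^ 3 + (-264 : K) * n * l ^ 26 * N ^ 4 + (-2 : K) * n * l ^ 27 * N + (177 : K) * n * l ^ 27 * N ^ 2 + (-7550 : K) * n * l ^ 27 * N ^ 3 + (516 : K) * n * l ^ 27 * N ^ 4 + (40 : K) * n * l ^ 28 * N ^ 2 + (4238 : K) * n * l ^ 28 * N ^ 3 + (-636 :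 K) * n * l ^ 28 * N ^ 4 + (-15 : K) * n * l ^ 29 * N ^ 2 + (-1618 : K) * n * l ^ 29 * N ^ 3 + (494 : K) * n * l ^ 29 * N ^ 4 + (1 : K) * n * l ^ 30 * N ^ 2 + (410 : K) * n * l ^ 30 * N ^ 3 + (-232 : K) * n * l ^ 30 * N ^ 4 + (-65 : K) * n * l ^ 31 * N ^ 3 + (59 : K) * n * l ^ 31 * N ^ 4 + (5 : K) * n * l ^ 32 * N ^ 3 + (-6 : K) * n * l ^ 32 * N ^ 4 + (5 : K) * n ^ 2 * l ^ 16 + (-50 : K) * n ^ 2 * l ^ 17 + (214 : K) * n ^ 2 * l ^ 18 + (-10 : K) * n ^ 2 * l ^ 18 * N + (-511 : K) * n ^ 2 * l ^ 19 + (110 : K) * n ^ 2 * l ^ 19 * N + (744 : K) * n ^ 2 * l ^ 20 + (-505 : K) * n ^ 2 * l ^ 20 * N + (10 : K) * n ^ 2 * l ^ 20 * N ^ 2 + (-676 : K) * n ^ 2 * l ^ 21 + (1269 : K) * n ^ 2 * l ^ 21 * N + (-115 : K) * n ^ 2 * l ^ 21 * N ^ 2 + (374 : K) * n ^ 2 *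 l ^ 22 + (-1916 : K) * n ^ 2 * l ^ 22 * N + (546 : K) * n ^ 2 * l ^ 22 * N ^ 2 + (-5 : K) * n ^ 2 * l ^ 22 * N ^ 3 + (-115 : K) * n ^ 2 * l ^ 23 + (1784 : K) * n ^ 2 * l ^ 23 * N + (-1406 : K) * n ^ 2 * l ^ 23 * N ^ 2 + (59 : K) * n ^ 2 * l ^ 23 * N ^ 3 + (15 : K) * n ^ 2 * l ^ 24 + (-1001 : K) * n ^ 2 * l ^ 24 * N + (2159 : K) * n ^ 2 * l ^ 24 * N ^ 2 + (-286 : K) * n ^ 2 * l ^ 24 * N ^ 3 + (1 : K) * n ^ 2 * l ^ 24 * N ^ 4 + (309 : K) * n ^ 2 * l ^ 25 * N + (-2031 : K) * n ^ 2 * l ^ 25 * N ^ 2 + (748 : K) * n ^ 2 * l ^ 25 * N ^ 3 + (-12 : K) * n ^ 2 * l ^ 25 * N ^ 4 + (-40 : K) * n ^ 2 * l ^ 26 * N + (1144 : K) * n ^ 2 * l ^ 26 * N ^ 2 + (-1161 : K) * n ^ 2 * l ^ 26 * N ^ 3 + (59 : K) * n ^ 2 * l ^ 26 * N ^ 4 +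 (-352 : K) * n ^ 2 * l ^ 27 * N ^ 2 + (1099 : K) * n ^ 2 * l ^ 27 * N ^ 3 + (-156 : K) * n ^ 2 * l ^ 27 * N ^ 4 + (45 : K) * n ^ 2 * l ^ 28 * N ^ 2 + (-620 : K) * n ^ 2 * l ^ 28 * N ^ 3 + (244 : K) * n ^ 2 * l ^ 28 * N ^ 4 + (190 : K) * n ^ 2 * l ^ 29 * N ^ 3 + (-232 : K) * n ^ 2 * l ^ 29 * N ^ 4 + (-24 : K) * n ^ 2 * l ^ 30 * N ^ 3 + (131 : K) * n ^ 2 * l ^ 30 * N ^ 4 + (-40 : K) * n ^ 2 * l ^ 31 * N ^ 4 + (5 : K) * n ^ 2 * l ^ 32 * N ^ 4) * h2 + ((-1 : K) * l ^ 14 + (17 : K) * l ^ 15 + (-124 : K) * l ^ 16 + (511 : K) * l ^ 17 + (-1319 : K) * l ^ 18 + (-1 : K) * l ^ 18 * N + (2233 : K) * l ^ 19 + (14 : K) * l ^ 19 * N + (-2518 : K) * l ^ 20 + (-82 : K) * l ^ 20 * N + (1874 : K) * l ^ 21 + (264 : K) * l ^ 21 * N + (-886 : K) * l ^ 22 + (-516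 : K) * l ^ 22 * N + (244 : K) * l ^ 23 + (636 : K) * l ^ 23 * N + (-32 : K) * l ^ 24 + (-494 : K) * l ^ 24 * N + (1 : K) * l ^ 25 + (232 : K) * l ^ 25 * N + (-59 : K) * l ^ 26 * N + (6 : K) * l ^ 27 * N + (-1 : K) * n * l ^ 15 + (15 : K) * n * l ^ 16 + (-95 : K) * n * l ^ 17 + (334 : K) * n * l ^ 18 + (-721 : K) * n * l ^ 19 + (-1 : K) * n * l ^ 19 * N + (996 : K) * n * l ^ 20 + (12 : K) * n * l ^ 20 * N + (-886 : K) * n * l ^ 21 + (-59 : K) * n * l ^ 21 * N + (494 : K) * n * l ^ 22 + (156 : K) * n * l ^ 22 * N + (-160 : K) * n * l ^ 23 + (-244 : K) * n * l ^ 23 * N + (25 : K) * n * l ^ 24 + (232 : K) * n * l ^ 24 * N + (-1 : K) * n * l ^ 25 + (-131 : K) * n * l ^ 25 * N + (40 : K) * n * l ^ 26 * N + (-5 : K) * n * l ^ 27 * N) * h3 - ((1 : K) * l ^ 15 + (-10 : K) * l ^ 16 + (45 : K) * l ^ 17 + (-120 : K) * l ^ 18 + (210 : K) * l ^ 19 +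 (-252 : K) * l ^ 20 + (210 : K) * l ^ 21 + (-120 : K) * l ^ 22 + (45 : K) * l ^ 23 + (-10 : K) * l ^ 24 + (1 : K) * l ^ 25) * h1
  have hn : n ≠ 0 := by
    intro h
    rw [h] at h1
    simp at h1
  have hl1' : (1 : K) - l ≠ 0 := sub_ne_zero.mpr (Ne.symm hl1)
  rcases mul_eq_zero.mp key with h | h
  · rcases mul_eq_zero.mp h with h | h
    · exact hn h
    · exact hl0 (pow_eq_zero_iff (by norm_num) |>.mp h)
  · exact hl1' (pow_eq_zero_iff (by norm_num) |>.mp h)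

theorem stmt_15 (q : ℕ) (hq : ∃ p n : ℕ, Nat.Prime p ∧ 0 < n ∧ q = p ^ n)
    (K : Type*) [Field K] (F : Subfield K)
    (hFcard : Nat.card F = q) (hKcard : Nat.card K = q ^ 5)
    (η : K) (hη : η ≠ 0)
    (hN : (η ^ (1 + q + q ^ 2 + q ^ 3 + q ^ 4)) ^ 2 -
        η ^ (1 + q + q ^ 2 + q ^ 3 + q ^ 4) + 1 = 0) :
    ¬ ∃ l β : K, l ∈ F ∧ l ≠ 0 ∧ l ≠ 1 ∧ β ≠ 0 ∧
        (l ^ 2 * β ^ (1 + q + q ^ 2 + q ^ 3 + q ^ 4) - 1) * η =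
          l * (1 - l) * β ^ (q ^ 3 + q ^ 2 + q + 1) ∧
        l ^ 5 * (β ^ (1 + q + q ^ 2 + q ^ 3 + q ^ 4)) ^ 2 +
          l * (1 - 3 * l) * β ^ (1 + q + q ^ 2 + q ^ 3 + q ^ 4) + 1 = 0 := by
  rintro ⟨l, β, hlF, hl0, hl1, hβ0, hA, hB⟩
  obtain ⟨p, m, hp, hm, hqe⟩ := hq
  have hq0 : q ≠ 0 := by
    rw [hqe]; exact pow_ne_zero _ hp.pos.ne'
  -- finiteness
  haveI : Finite K := Nat.finite_of_card_ne_zero (by rw [hKcard]; positivity)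
  haveI : Fintype K := Fintype.ofFinite K
  have hKc : Fintype.card K = q ^ 5 := by rw [← Nat.card_eq_fintype_card, hKcard]
  have hK5 : ∀ x : K, x ^ q ^ 5 = x := by
    intro x; rw [← hKc]; exact FiniteField.pow_card x
  -- elements of F are fixed by x ↦ x^q
  haveI : Finite F := Nat.finite_of_card_ne_zero (by rw [hFcard]; exact hq0)
  haveI : Fintype F := Fintype.ofFinite F
  have hFc : Fintype.card F = q := by rw [← Nat.card_eq_fintype_card, hFcard]
  have hlq : l ^ q = l := by
    have := FiniteField.pow_card (⟨l, hlF⟩ : F)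
    rw [hFc] at this
    simpa using congrArg Subtype.val this
  -- characteristic
  haveI : Fact p.Prime := ⟨hp⟩
  have hpK : (p : K) = 0 := by
    have h0 : ((Fintype.card K : K)) = 0 := FiniteField.cast_card_eq_zero K
    rw [hKc, hqe] at h0
    push_cast at h0
    rw [← pow_mul] at h0
    exact pow_eq_zero_iff (by positivity) |>.mp h0
  haveI : CharP K p := (CharP.charP_iff_prime_eq_zero hp).mpr hpK
  have hsub : ∀ x y : K, (x - y) ^ q = x ^ q - y ^ q := by
    intro x y
    rw [hqe]
    exact sub_pow_expChar_pow x y m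
  -- Frobenius-fixed elements, norms
  have hNq : (β ^ (1 + q + q ^ 2 + q ^ 3 + q ^ 4)) ^ q = β ^ (1 + q + q ^ 2 + q ^ 3 + q ^ 4) := by
    rw [← pow_mul]
    have e1 : (1 + q + q ^ 2 + q ^ 3 + q ^ 4) * q = (q + q ^ 2 + q ^ 3 + q ^ 4) + q ^ 5 := by ring
    rw [e1, pow_add, hK5, ← pow_succ]
    congr 1
    ring
  have hnq : (η ^ (1 + q + q ^ 2 + q ^ 3 + q ^ 4)) ^ q = η ^ (1 + q + q ^ 2 + q ^ 3 + q ^ 4) := by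
    rw [← pow_mul]
    have e1 : (1 + q + q ^ 2 + q ^ 3 + q ^ 4) * q = (q + q ^ 2 + q ^ 3 + q ^ 4) + q ^ 5 := by ring
    rw [e1, pow_add, hK5, ← pow_succ]
    congr 1
    ring
  set N : K := β ^ (1 + q + q ^ 2 + q ^ 3 + q ^ 4) with hNdef
  set n : K := η ^ (1 + q + q ^ 2 + q ^ 3 + q ^ 4) with hndef
  have fixpow : ∀ x : K, x ^ q = x → x ^ (1 + q + q ^ 2 + q ^ 3 + q ^ 4) = x ^ 5 := by
    intro x hx
    have e2 : x ^ q ^ 2 = x := by rw [pow_two, pow_mul, hx, hx]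
    have e3 : x ^ q ^ 3 = x := by rw [pow_succ, pow_mul, e2, hx]
    have e4 : x ^ q ^ 4 = x := by rw [pow_succ, pow_mul, e3, hx]
    rw [pow_add, pow_add, pow_add, pow_add, hx, e2, e3, e4, pow_one]
    ring
  have hMq : (l ^ 2 * N - 1) ^ q = l ^ 2 * N - 1 := by
    rw [hsub, mul_pow, one_pow, ← pow_mul, mul_comm 2 q, pow_mul, hlq, hNq]
  have h1mlq : (1 - l) ^ q = 1 - l := by
    rw [hsub, one_pow, hlq]
  -- raise the first equation to the norm power
  have hD : (β ^ (q ^ 3 + q ^ 2 + q + 1)) ^ (1 + q + q ^ 2 + q ^ 3 + q ^ 4) = N ^ 4 := by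
    rw [hNdef, ← pow_mul, ← pow_mul]
    have e1 : (q ^ 3 + q ^ 2 + q + 1) * (1 + q + q ^ 2 + q ^ 3 + q ^ 4) =
        (1 + 2 * q + 3 * q ^ 2 + 4 * q ^ 3 + 4 * q ^ 4) + (3 + 2 * q + q ^ 2) * q ^ 5 := by
      ring
    rw [e1, pow_add, pow_mul, hK5, ← pow_add]
    congr 1
    ring
  have h3 : (l ^ 2 * N - 1) ^ 5 * n = l ^ 5 * (1 - l) ^ 5 * N ^ 4 := by
    have h := congrArg (· ^ (1 + q + q ^ 2 + q ^ 3 + q ^ 4)) hA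
    simp only [mul_pow] at h
    rw [fixpow _ hMq, fixpow _ hlq, fixpow _ h1mlq, hD] at h
    exact h
  exact aux_resultant n l N hN hB h3 hl0 hl1
end
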